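/- Let f : ℝ → ℝ be continuous with f(x) > 0 for all x, let x₀ > 0 and t∞ ∈ (0,∞), and let x : [0, t∞) → ℝ be differentiable with x(0) = x₀, x′(t) = f(x(t)) for all t ∈ [0, t∞), and x(t) → +∞ as t → t∞. Then ∫_0^{t∞} x(t) dt < ∞ if and only if ∫_{x₀}^∞ (u/f(u)) du < ∞; in fact ∫_0^{t∞} x(t) dt = ∫_{x₀}^∞ (u/f(u)) du. -/

import Mathlib

open MeasureTheory Set Filter

/-- If `x` solves `x' = f(x)`, `x(0) = x₀ > 0`, on `[0, t∞)` with
`f` continuous positive, `t∞ ∈ (0,∞)` finite, and `x(t) → +∞` as `t → t∞⁻`, then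
`∫_0^{t∞} x(t) dt = ∫_{x₀}^∞ u/f(u) du` (in `(0,∞]`); in particular one integral is
finite iff the other is. -/
theorem stmt18 (f : ℝ → ℝ) (hf : Continuous f) (hfpos : ∀ u : ℝ, 0 < f u)
    (x₀ : ℝ) (hx₀ : 0 < x₀) (tinf : ℝ) (htinf : 0 < tinf)
    (x : ℝ → ℝ) (hx0 : x 0 = x₀)
    (hode : ∀ t ∈ Ico 0 tinf, HasDerivWithinAt x (f (x t)) (Ico 0 tinf) t)
    (hblow : Tendsto x (nhdsWithin tinf (Iio tinf)) atTop) :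
    (∫⁻ t in Ico 0 tinf, ENNReal.ofReal (x t)) =
        (∫⁻ u in Ici x₀, ENNReal.ofReal (u / f u)) ∧
      ((∫⁻ t in Ico 0 tinf, ENNReal.ofReal (x t)) < ⊤ ↔
        (∫⁻ u in Ici x₀, ENNReal.ofReal (u / f u)) < ⊤) := by
  have h0mem : (0 : ℝ) ∈ Ico 0 tinf := ⟨le_refl 0, htinf⟩
  have hcont : ContinuousOn x (Ico 0 tinf) :=
    fun t ht => (hode t ht).continuousWithinAt
  -- strict monotonicity
  have hmono : StrictMonoOn x (Ico 0 tinf) := by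
    apply strictMonoOn_of_deriv_pos (convex_Ico 0 tinf) hcont
    intro t ht
    rw [interior_Ico] at ht
    have hda : HasDerivAt x (f (x t)) t :=
      (hode t ⟨le_of_lt ht.1, ht.2⟩).hasDerivAt
        (Filter.mem_of_superset (Ioo_mem_nhds ht.1 ht.2) Ioo_subset_Ico_self)
    rw [hda.deriv]
    exact hfpos _
  -- image
  have himg : x '' Ico 0 tinf = Ici x₀ := by
    apply Subset.antisymm
    · rintro _ ⟨t, ht, rfl⟩
      have : x 0 ≤ x t := (hmono.monotoneOn) h0mem ht ht.1
      rw [hx0] at this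
      exact this
    · intro y hy
      -- find t' ∈ Ioo 0 tinf with y ≤ x t'
      have hne : (nhdsWithin tinf (Iio tinf)).NeBot := nhdsLT_neBot tinf
      have h1 : ∀ᶠ t in nhdsWithin tinf (Iio tinf), y ≤ x t :=
        hblow.eventually_ge_atTop y
      have h2 : Ioo 0 tinf ∈ nhdsWithin tinf (Iio tinf) := by
        rw [mem_nhdsWithin]
        exact ⟨Ioi 0, isOpen_Ioi, htinf, fun t ht => ⟨ht.1, ht.2⟩⟩
      obtain ⟨t', ht', hyt'⟩ := (h1.and (eventually_of_mem h2 fun t ht => ht)).exists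
      have hsub : Icc 0 t' ⊆ Ico 0 tinf := fun s hs => ⟨hs.1, lt_of_le_of_lt hs.2 hyt'.2⟩
      have := intermediate_value_Icc (le_of_lt hyt'.1) (hcont.mono hsub)
      have hymem : y ∈ Icc (x 0) (x t') := ⟨hx0 ▸ hy, ht'⟩
      exact image_mono hsub (this hymem)
  have hinj : InjOn x (Ico 0 tinf) := hmono.injOn
  -- change of variables
  have key := MeasureTheory.lintegral_image_eq_lintegral_abs_det_fderiv_mul volume
    measurableSet_Ico (fun t ht => (hode t ht).hasFDerivWithinAt) hinj
    (fun u => ENNReal.ofReal (u / f u))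
  rw [himg] at key
  have heq : (∫⁻ u in Ici x₀, ENNReal.ofReal (u / f u))
      = ∫⁻ t in Ico 0 tinf, ENNReal.ofReal (x t) := by
    rw [key]
    apply setLIntegral_congr_fun measurableSet_Ico
    intro t ht
    dsimp only
    have hpos := hfpos (x t)
    rw [ContinuousLinearMap.det_toSpanSingleton, abs_of_pos hpos,
      ← ENNReal.ofReal_mul (le_of_lt hpos), mul_div_cancel₀ _ (ne_of_gt hpos)]
  refine ⟨heq.symm, by rw [heq]⟩
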